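/- Let p be a prime and let L be a Moufang loop with a central subgroup Z of order p such that L/Z is an elementary abelian p-group. Then for all c, d ∈ L: (cd)² = c²d²[c,d] if p = 2, and (cd)^p = c^p d^p if p > 2. In particular, the map sending each coset cZ to c^p ∈ Z is well defined, and is a linear (group homomorphism) map L/Z → Z when p > 2. -/
import Mathlib


/-- An inverse property loop: a set with multiplication, identity, and two-sided
inverses satisfying `a⁻¹(ax) = x = (xa)a⁻¹`. -/
class IPLoop (L : Type*) extends Mul L, One L, Inv L where
  one_mul : ∀ a : L, 1 * a = a
  mul_one : ∀ a : L, a * 1 = a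
  inv_mul_cancel_left : ∀ a x : L, a⁻¹ * (a * x) = x
  mul_inv_cancel_right : ∀ a x : L, (x * a) * a⁻¹ = x

namespace IPLoop

variable {L : Type*} [IPLoop L]

/-- Powers with natural number exponent, `c^(n+1) = c * c^n`. -/
def npow (c : L) : ℕ → L
  | 0 => 1
  | n + 1 => c * npow c n

instance : Pow L ℕ := ⟨npow⟩

/-- Powers with integer exponent. -/
def zpow (c : L) : ℤ → L
  | Int.ofNat n => c ^ n
  | Int.negSucc n => (c ^ (n + 1))⁻¹

instance : Pow L ℤ := ⟨zpow⟩

/-- The commutator `[c,d] = (dc)⁻¹(cd)`. -/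
def comm (c d : L) : L := (d * c)⁻¹ * (c * d)

/-- The associator `[c,d,e] = (c(de))⁻¹((cd)e)`. -/
def assoc (c d e : L) : L := (c * (d * e))⁻¹ * ((c * d) * e)

/-- Membership in the center `Z(L)`. -/
def inCenter (z : L) : Prop :=
  (∀ x : L, comm z x = 1) ∧
  ∀ x y : L, assoc z x y = 1 ∧ assoc x z y = 1 ∧ assoc x y z = 1

/-- The Moufang identity `((dc)e)c = d(c(ec))`. -/
def IsMoufang (L : Type*) [IPLoop L] : Prop :=
  ∀ c d e : L, ((d * c) * e) * c = d * (c * (e * c))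

/-- A loop is of (central nilpotence) class at most 2 if every commutator and
every associator lies in the center. -/
def ClassTwo (L : Type*) [IPLoop L] : Prop :=
  (∀ c d : L, inCenter (comm c d)) ∧ ∀ c d e : L, inCenter (assoc c d e)

/-- The order of an element: least `n > 0` with `c^n = 1` (or `0` if none). -/
noncomputable def ordOf (c : L) : ℕ := sInf {n : ℕ | 0 < n ∧ c ^ n = 1}

/-- The subloop generated by a subset `S`. -/
def subloopClosure (S : Set L) : Set L :=
  ⋂₀ {T : Set L | (1 : L) ∈ T ∧ (∀ x ∈ T, x⁻¹ ∈ T) ∧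
      (∀ x ∈ T, ∀ y ∈ T, x * y ∈ T) ∧ S ⊆ T}

end IPLoop

namespace Stmt11Aux

open IPLoop

variable {L : Type*} [IPLoop L]

/-! ### Basic inverse-property loop facts -/

theorem lcan {a x y : L} (h : a * x = a * y) : x = y := by
  have h1 : a⁻¹ * (a * x) = a⁻¹ * (a * y) := by rw [h]
  rwa [IPLoop.inv_mul_cancel_left, IPLoop.inv_mul_cancel_left] at h1

theorem invmul (a : L) : a⁻¹ * a = 1 := by
  have h := IPLoop.inv_mul_cancel_left a 1
  rwa [IPLoop.mul_one] at h

theorem mulinv (a : L) : a * a⁻¹ = 1 := by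
  have h := IPLoop.mul_inv_cancel_right a 1
  rwa [IPLoop.one_mul] at h

theorem invinv (a : L) : a⁻¹⁻¹ = a := by
  have h := IPLoop.inv_mul_cancel_left a⁻¹ a
  rwa [invmul, IPLoop.mul_one] at h

theorem lip (a x : L) : a * (a⁻¹ * x) = x := by
  have h := IPLoop.inv_mul_cancel_left a⁻¹ x
  rwa [invinv] at h

theorem rip (a x : L) : (x * a⁻¹) * a = x := by
  have h := IPLoop.mul_inv_cancel_right a⁻¹ x
  rwa [invinv] at h

theorem eq_of_inv_mul_one {u v : L} (h : u⁻¹ * v = 1) : v = u := by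
  have h1 : u * (u⁻¹ * v) = u * 1 := by rw [h]
  rwa [lip, IPLoop.mul_one] at h1

theorem inv_of_mul_one_left {u v : L} (h : u * v = 1) : u = v⁻¹ := by
  have h1 := IPLoop.mul_inv_cancel_right v u
  rw [h, IPLoop.one_mul] at h1
  exact h1.symm

theorem inv_of_mul_one_right {u v : L} (h : u * v = 1) : v = u⁻¹ := by
  have h1 : u * v = u * u⁻¹ := by rw [h, mulinv]
  exact lcan h1

theorem eq_mul_inv_of {a b u : L} (h : a = b * u) : b = a * u⁻¹ := by
  rw [h]
  exact (IPLoop.mul_inv_cancel_right u b).symm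

theorem mul_inv_rev' (a b : L) : (a * b)⁻¹ = b⁻¹ * a⁻¹ := by
  have h1 : (b⁻¹ * a⁻¹) * a = b⁻¹ := rip a b⁻¹
  have h2 : (b⁻¹ * a⁻¹)⁻¹ * b⁻¹ = a := by
    have h := IPLoop.inv_mul_cancel_left (b⁻¹ * a⁻¹) a
    rwa [h1] at h
  have h3 : a * b = (b⁻¹ * a⁻¹)⁻¹ := by
    conv_lhs => rw [← h2]
    exact rip b ((b⁻¹ * a⁻¹)⁻¹)
  rw [h3, invinv]

theorem assoc_eq (x y z : L) : (x * y) * z = (x * (y * z)) * assoc x y z :=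
  (lip (x * (y * z)) ((x * y) * z)).symm

theorem comm_eq (c d : L) : c * d = (d * c) * comm c d :=
  (lip (d * c) (c * d)).symm

theorem assoc_eq_one_of {x y z : L} (h : (x * y) * z = x * (y * z)) : assoc x y z = 1 := by
  show (x * (y * z))⁻¹ * ((x * y) * z) = 1
  rw [h, invmul]

theorem mul_of_assoc_one {x y z : L} (h : assoc x y z = 1) : (x * y) * z = x * (y * z) := by
  have h1 := assoc_eq x y z
  rwa [h, IPLoop.mul_one] at h1

theorem assoc_unique {x y z u : L} (h : (x * y) * z = (x * (y * z)) * u) : u = assoc x y z :=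
  lcan (h.symm.trans (assoc_eq x y z))

theorem comm_unique {x y u : L} (h : x * y = (y * x) * u) : u = comm x y :=
  lcan (h.symm.trans (comm_eq x y))

/-! ### Central data -/

structure CentralData {L : Type*} [IPLoop L] (Z : Set L) : Prop where
  one_mem : (1 : L) ∈ Z
  inv_mem : ∀ z ∈ Z, z⁻¹ ∈ Z
  mul_mem : ∀ z ∈ Z, ∀ w ∈ Z, z * w ∈ Z
  cent : ∀ z ∈ Z, inCenter z
  comm_mem : ∀ c d : L, comm c d ∈ Z
  assoc_mem : ∀ c d e : L, assoc c d e ∈ Z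

variable {Z : Set L}

theorem zc (hD : CentralData Z) {z : L} (hz : z ∈ Z) (x : L) : z * x = x * z :=
  eq_of_inv_mul_one ((hD.cent z hz).1 x)

theorem za1 (hD : CentralData Z) {z : L} (hz : z ∈ Z) (x y : L) :
    (z * x) * y = z * (x * y) :=
  mul_of_assoc_one ((hD.cent z hz).2 x y).1

theorem za2 (hD : CentralData Z) {z : L} (hz : z ∈ Z) (x y : L) :
    (x * z) * y = x * (z * y) :=
  mul_of_assoc_one ((hD.cent z hz).2 x y).2.1

theorem za3 (hD : CentralData Z) {z : L} (hz : z ∈ Z) (x y : L) :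
    (x * y) * z = x * (y * z) :=
  mul_of_assoc_one ((hD.cent z hz).2 x y).2.2

theorem zr (hD : CentralData Z) {z : L} (hz : z ∈ Z) (x y : L) :
    (x * z) * y = (x * y) * z := by
  rw [za2 hD hz x y, zc hD hz y, ← za3 hD hz x y]

theorem zswap (hD : CentralData Z) {a b : L} (ha : a ∈ Z) (hb : b ∈ Z) (u : L) :
    (u * a) * b = (u * b) * a := by
  rw [za3 hD hb u a, zc hD ha b, ← za3 hD ha u b]

/-! ### Moufang consequences -/

theorem flexL (hM : IsMoufang L) (c e : L) : (c * e) * c = c * (e * c) := by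
  have h := hM c 1 e
  rwa [IPLoop.one_mul, IPLoop.one_mul] at h

theorem rightaltL (hM : IsMoufang L) (d c : L) : (d * c) * c = d * (c * c) := by
  have h := hM c d 1
  rwa [IPLoop.mul_one, IPLoop.one_mul] at h

theorem mirrorL (hM : IsMoufang L) (a b f : L) :
    a * (b * (a * f)) = ((a * b) * a) * f := by
  have h := hM a⁻¹ f⁻¹ b⁻¹
  have h2 : ((((f⁻¹ * a⁻¹) * b⁻¹) * a⁻¹))⁻¹ = (f⁻¹ * (a⁻¹ * (b⁻¹ * a⁻¹)))⁻¹ := by rw [h]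
  simp only [mul_inv_rev', invinv] at h2
  exact h2

theorem leftaltL (hM : IsMoufang L) (a f : L) : a * (a * f) = (a * a) * f := by
  have h := mirrorL hM a 1 f
  rwa [IPLoop.one_mul, IPLoop.mul_one] at h

theorem assoc_flex (hM : IsMoufang L) (x y : L) : assoc x y x = 1 :=
  assoc_eq_one_of (flexL hM x y)

theorem assoc_rr (hM : IsMoufang L) (x y : L) : assoc x y y = 1 :=
  assoc_eq_one_of (rightaltL hM x y)

theorem assoc_ll (hM : IsMoufang L) (x y : L) : assoc x x y = 1 :=
  assoc_eq_one_of (leftaltL hM x y).symm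

/-! ### Associator identities at loop level -/

theorem assoc_em1 (hD : CentralData Z) (hM : IsMoufang L) (x y z : L) :
    assoc x (y * z) y = (assoc x y z)⁻¹ := by
  have hA1 : assoc x y z ∈ Z := hD.assoc_mem x y z
  have s := hM y x z
  rw [assoc_eq x y z] at s
  rw [zr hD hA1 (x * (y * z)) y] at s
  rw [assoc_eq x (y * z) y] at s
  rw [flexL hM y z] at s
  rw [za3 hD hA1 (x * (y * (z * y))) (assoc x (y * z) y)] at s
  have s2 : (x * (y * (z * y))) * (assoc x (y * z) y * assoc x y z)
      = (x * (y * (z * y))) * 1 := by rw [IPLoop.mul_one]; exact s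
  exact inv_of_mul_one_left (lcan s2)

theorem assoc_em2 (hD : CentralData Z) (hM : IsMoufang L) (x y z : L) :
    assoc y (z * y) x = (assoc z y x)⁻¹ := by
  have hA3 : (assoc z y x)⁻¹ ∈ Z := hD.inv_mem _ (hD.assoc_mem z y x)
  have hA4 : (assoc y (z * y) x)⁻¹ ∈ Z := hD.inv_mem _ (hD.assoc_mem y (z * y) x)
  have s := mirrorL hM y z x
  have h3 : z * (y * x) = ((z * y) * x) * (assoc z y x)⁻¹ := eq_mul_inv_of (assoc_eq z y x)
  rw [h3] at s
  rw [← za3 hD hA3 y ((z * y) * x)] at s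
  have h4 : y * ((z * y) * x) = ((y * (z * y)) * x) * (assoc y (z * y) x)⁻¹ :=
    eq_mul_inv_of (assoc_eq y (z * y) x)
  rw [h4] at s
  rw [← flexL hM y z] at s
  rw [za3 hD hA3 (((y * z) * y) * x) ((assoc y (z * y) x)⁻¹)] at s
  have s2 : (((y * z) * y) * x) * ((assoc y (z * y) x)⁻¹ * (assoc z y x)⁻¹)
      = (((y * z) * y) * x) * 1 := by rw [IPLoop.mul_one]; exact s
  have h6 : (assoc y (z * y) x)⁻¹ = assoc z y x := by
    have h7 := inv_of_mul_one_left (lcan s2)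
    rwa [invinv] at h7
  calc assoc y (z * y) x = ((assoc y (z * y) x)⁻¹)⁻¹ := (invinv _).symm
    _ = (assoc z y x)⁻¹ := by rw [h6]

theorem assoc_inv3 (hD : CentralData Z) (x y z : L) :
    assoc x (y * z) z⁻¹ = (assoc x y z)⁻¹ := by
  have hA1 : assoc x y z ∈ Z := hD.assoc_mem x y z
  have s := IPLoop.mul_inv_cancel_right z (x * y)
  rw [assoc_eq x y z] at s
  rw [zr hD hA1 (x * (y * z)) z⁻¹] at s
  rw [assoc_eq x (y * z) z⁻¹] at s
  rw [IPLoop.mul_inv_cancel_right z y] at s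
  rw [za3 hD hA1 (x * y) (assoc x (y * z) z⁻¹)] at s
  have s2 : (x * y) * (assoc x (y * z) z⁻¹ * assoc x y z) = (x * y) * 1 := by
    rw [IPLoop.mul_one]; exact s
  exact inv_of_mul_one_left (lcan s2)

theorem assoc_inv1 (hD : CentralData Z) (z y w : L) :
    assoc z⁻¹ (z * y) w = (assoc z y w)⁻¹ := by
  have hA : assoc z y w ∈ Z := hD.assoc_mem z y w
  have h1 := assoc_eq z⁻¹ (z * y) w
  rw [assoc_eq z y w] at h1
  rw [← za3 hD hA z⁻¹ (z * (y * w))] at h1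
  rw [IPLoop.inv_mul_cancel_left z (y * w)] at h1
  rw [za3 hD (hD.assoc_mem z⁻¹ (z * y) w) (y * w) (assoc z y w)] at h1
  rw [IPLoop.inv_mul_cancel_left z y] at h1
  have h2 : (y * w) * (assoc z y w * assoc z⁻¹ (z * y) w) = (y * w) * 1 := by
    rw [IPLoop.mul_one]; exact h1.symm
  exact inv_of_mul_one_right (lcan h2)

theorem assoc_coc (hD : CentralData Z) (x y u v : L) :
    assoc x y (u * v)
      = (assoc y u v * (assoc x (y * u) v * assoc x y u)) * (assoc (x * y) u v)⁻¹ := by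
  have h6 : assoc x y u ∈ Z := hD.assoc_mem x y u
  have h7 : assoc x (y * u) v ∈ Z := hD.assoc_mem x (y * u) v
  have h8 : assoc y u v ∈ Z := hD.assoc_mem y u v
  have h76 : assoc x (y * u) v * assoc x y u ∈ Z := hD.mul_mem _ h7 _ h6
  have way1 : ((x * y) * u) * v
      = (x * (y * (u * v))) * (assoc y u v * (assoc x (y * u) v * assoc x y u)) := by
    calc ((x * y) * u) * v
        = ((x * (y * u)) * assoc x y u) * v := by rw [assoc_eq x y u]
      _ = ((x * (y * u)) * v) * assoc x y u := zr hD h6 (x * (y * u)) v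
      _ = ((x * ((y * u) * v)) * assoc x (y * u) v) * assoc x y u := by
          rw [assoc_eq x (y * u) v]
      _ = ((x * ((y * (u * v)) * assoc y u v)) * assoc x (y * u) v) * assoc x y u := by
          rw [assoc_eq y u v]
      _ = (((x * (y * (u * v))) * assoc y u v) * assoc x (y * u) v) * assoc x y u := by
          rw [za3 hD h8 x (y * (u * v))]
      _ = ((x * (y * (u * v))) * assoc y u v) * (assoc x (y * u) v * assoc x y u) := by
          rw [za3 hD h6 ((x * (y * (u * v))) * assoc y u v) (assoc x (y * u) v)]
      _ = (x * (y * (u * v))) * (assoc y u v * (assoc x (y * u) v * assoc x y u)) := by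
          rw [za3 hD h76 (x * (y * (u * v))) (assoc y u v)]
  have way2 : ((x * y) * u) * v
      = (x * (y * (u * v))) * (assoc x y (u * v) * assoc (x * y) u v) := by
    calc ((x * y) * u) * v
        = ((x * y) * (u * v)) * assoc (x * y) u v := by rw [assoc_eq (x * y) u v]
      _ = ((x * (y * (u * v))) * assoc x y (u * v)) * assoc (x * y) u v := by
          rw [assoc_eq x y (u * v)]
      _ = (x * (y * (u * v))) * (assoc x y (u * v) * assoc (x * y) u v) := by
          rw [za3 hD (hD.assoc_mem (x * y) u v) (x * (y * (u * v))) (assoc x y (u * v))]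
  have h9 : assoc x y (u * v) * assoc (x * y) u v
      = assoc y u v * (assoc x (y * u) v * assoc x y u) := lcan (way2.symm.trans way1)
  rw [← h9]
  exact (IPLoop.mul_inv_cancel_right (assoc (x * y) u v) (assoc x y (u * v))).symm

theorem assoc_cong3 (hD : CentralData Z) {z : L} (hz : z ∈ Z) (x y w : L) :
    assoc x y (w * z) = assoc x y w := by
  refine (assoc_unique ?_).symm
  have hA : assoc x y w ∈ Z := hD.assoc_mem x y w
  calc (x * y) * (w * z)
      = ((x * y) * w) * z := (za3 hD hz (x * y) w).symm
    _ = ((x * (y * w)) * assoc x y w) * z := by rw [assoc_eq x y w]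
    _ = ((x * (y * w)) * z) * assoc x y w := zswap hD hA hz (x * (y * w))
    _ = (x * ((y * w) * z)) * assoc x y w := by rw [za3 hD hz x (y * w)]
    _ = (x * (y * (w * z))) * assoc x y w := by rw [za3 hD hz y w]

theorem assoc_comm3 (hD : CentralData Z) (x y u v : L) :
    assoc x y (u * v) = assoc x y (v * u) := by
  rw [comm_eq u v]
  exact assoc_cong3 hD (hD.comm_mem u v) x y (v * u)

theorem assoc_one3 (hD : CentralData Z) (x y : L) : assoc x y 1 = 1 :=
  ((hD.cent 1 hD.one_mem).2 x y).2.2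

theorem comm_mul_comm (hD : CentralData Z) (c d : L) : comm d c * comm c d = 1 := by
  calc comm d c * comm c d
      = ((c * d)⁻¹ * (d * c)) * comm c d := rfl
    _ = (c * d)⁻¹ * ((d * c) * comm c d) := za3 hD (hD.comm_mem c d) ((c * d)⁻¹) (d * c)
    _ = (c * d)⁻¹ * (c * d) := by rw [← comm_eq c d]
    _ = 1 := invmul _

/-! ### The abstract additive juggle -/

variable {G : Type*} [AddCommGroup G]

structure JuggleHyp {L : Type*} [IPLoop L] {G : Type*} [AddCommGroup G]
    (g : L → L → L → G) : Prop where
  em1 : ∀ x y z : L, g x (y * z) y = - g x y z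
  em2 : ∀ x y z : L, g y (z * y) x = - g z y x
  coc : ∀ x y u v : L, g x y (u * v)
    = (g y u v + (g x (y * u) v + g x y u)) - g (x * y) u v
  inv3 : ∀ x y z : L, g x (y * z) z⁻¹ = - g x y z
  inv1 : ∀ z y w : L, g z⁻¹ (z * y) w = - g z y w
  dg1 : ∀ x y : L, g x y x = 0
  dg3 : ∀ x y : L, g x y y = 0
  c3 : ∀ x y u v : L, g x y (u * v) = g x y (v * u)

variable {g : L → L → L → G}

/-- defect of additivity in the last slot -/
def Ddef (g : L → L → L → G) (a b c d : L) : G :=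
  g a b (c * d) - g a b c - g a b d

variable (hg : JuggleHyp g)
include hg

theorem Jra (x B C : L) : g x B C = - g x C (C⁻¹ * B) := by
  have h := hg.em1 x C (C⁻¹ * B)
  rwa [lip] at h

theorem Jrb (x B C : L) : g x B C = - g x (B * C) C⁻¹ := by
  rw [hg.inv3 x B C, neg_neg]

theorem Jsh32a (x B C : L) : g x B C = g x B (B⁻¹ * C) := by
  have h1 := Jra hg x B C
  have h2 := Jrb hg x C (C⁻¹ * B)
  rw [lip, mul_inv_rev', invinv] at h2
  rw [h2, neg_neg] at h1
  exact h1

theorem Jsh32 (x B C : L) : g x B (B * C) = g x B C := by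
  have h := Jsh32a hg x B (B * C)
  rwa [IPLoop.inv_mul_cancel_left] at h

theorem Js23 (x a b : L) : g x a b = - g x b a := by
  have h := Jra hg x a b
  rwa [← Jsh32a hg x b a] at h

theorem Jrc (A B x : L) : g A B x = - g (B * A⁻¹) A x := by
  have h := hg.em2 x A (B * A⁻¹)
  rwa [rip] at h

theorem Jrd (A B w : L) : g A B w = - g A⁻¹ (A * B) w := by
  rw [hg.inv1 A B w, neg_neg]

theorem Jsh12 (A B x : L) : g (A * B) B x = g A B x := by
  have h1 := Jrc hg (A * B) B x
  have h2 := Jrd hg (B * (A * B)⁻¹) (A * B) x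
  rw [rip, mul_inv_rev' B ((A * B)⁻¹), invinv, IPLoop.mul_inv_cancel_right] at h2
  rw [h2, neg_neg] at h1
  exact h1

theorem Js12 (A B x : L) : g A B x = - g B A x := by
  have h1 := Jrc hg A B x
  have h2 := Jsh12 hg (B * A⁻¹) A x
  rw [rip] at h2
  rw [← h2] at h1
  exact h1

theorem Js13 (x y z : L) : g x y z = - g z y x := by
  calc g x y z = - g y x z := Js12 hg x y z
    _ = - - g y z x := by rw [Js23 hg y x z]
    _ = g y z x := neg_neg _
    _ = - g z y x := Js12 hg y z x

theorem Jsh31 (x y C : L) : g x y (x * C) = g x y C := by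
  have h1 : g x y (x * C) = - g y x (x * C) := Js12 hg x y (x * C)
  rw [Jsh32 hg y x C] at h1
  exact h1.trans (Js12 hg x y C).symm

theorem JDsym (a b c d : L) : Ddef g a b c d = Ddef g a b d c := by
  unfold Ddef
  rw [hg.c3 a b c d]
  abel

theorem JDskew (a b c d : L) : Ddef g b a c d = - Ddef g a b c d := by
  unfold Ddef
  rw [Js12 hg b a (c * d), Js12 hg b a c, Js12 hg b a d]
  abel

theorem JDcoc (x y u v : L) : Ddef g x y u v + Ddef g x v y u = Ddef g v u x y := by
  unfold Ddef
  rw [hg.coc x y u v, Js23 hg x v (y * u), Js23 hg x v y, Js23 hg x v u,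
    Js13 hg v u (x * y), Js13 hg v u x, Js13 hg v u y]
  abel

theorem JDzero (x y u v : L) : Ddef g x y u v = 0 := by
  have E1 : Ddef g x y u v + Ddef g x v y u = - Ddef g u v x y :=
    (JDcoc hg x y u v).trans (JDskew hg u v x y)
  have E2 : Ddef g x y u v + Ddef g x u y v = Ddef g u v x y := by
    have h := JDcoc hg x y v u
    rwa [JDsym hg x y v u] at h
  have E3 : Ddef g x u y v + Ddef g x y u v = Ddef g y v x u := by
    have h := JDcoc hg x u v y
    rwa [JDsym hg x u v y] at h
  have E5 : - Ddef g x y u v + Ddef g y v x u = - Ddef g u v x y := by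
    have h := JDcoc hg y x u v
    rwa [JDskew hg x y u v, JDsym hg v u y x, JDskew hg u v x y] at h
  have E6 : Ddef g u v x y + - Ddef g y u x v = - Ddef g x y u v := by
    have h := JDcoc hg u v x y
    rwa [JDsym hg u y v x, JDskew hg y u x v, JDskew hg x y u v] at h
  have E9 : - Ddef g y u x v + Ddef g u v x y = - Ddef g x v y u := by
    have h := JDcoc hg u y x v
    rwa [JDskew hg y u x v, JDsym hg u v y x, JDskew hg x v u y, JDsym hg x v u y] at h
  have E12 : - Ddef g x u y v + Ddef g u v x y = - Ddef g y v x u := by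
    have h := JDcoc hg u x y v
    rwa [JDskew hg x u y v, JDskew hg y v u x, JDsym hg y v u x] at h
  have key : Ddef g x y u v
      = (-2 : ℤ) • ((Ddef g x y u v + Ddef g x v y u) - (- Ddef g u v x y))
      + (1 : ℤ) • ((Ddef g x y u v + Ddef g x u y v) - Ddef g u v x y)
      + (3 : ℤ) • ((Ddef g x u y v + Ddef g x y u v) - Ddef g y v x u)
      + (-1 : ℤ) • ((- Ddef g x y u v + Ddef g y v x u) - (- Ddef g u v x y))
      + (-2 : ℤ) • ((Ddef g u v x y + - Ddef g y u x v) - (- Ddef g x y u v))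
      + (2 : ℤ) • ((- Ddef g y u x v + Ddef g u v x y) - (- Ddef g x v y u))
      + (4 : ℤ) • ((- Ddef g x u y v + Ddef g u v x y) - (- Ddef g y v x u)) := by
    abel
  rw [sub_eq_zero_of_eq E1, sub_eq_zero_of_eq E2, sub_eq_zero_of_eq E3,
    sub_eq_zero_of_eq E5, sub_eq_zero_of_eq E6, sub_eq_zero_of_eq E9,
    sub_eq_zero_of_eq E12] at key
  simpa using key

theorem Jadd3 (x y u v : L) : g x y (u * v) = g x y u + g x y v := by
  have h := JDzero hg x y u v
  unfold Ddef at h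
  rw [sub_sub] at h
  exact sub_eq_zero.mp h

theorem Jadd2 (x u v y : L) : g x (u * v) y = g x u y + g x v y := by
  rw [Js23 hg x (u * v) y, Jadd3 hg x y u v, Js23 hg x u y, Js23 hg x v y]
  abel

theorem Jadd1 (u v x y : L) : g (u * v) x y = g u x y + g v x y := by
  rw [Js13 hg (u * v) x y, Js13 hg u x y, Js13 hg v x y, Jadd3 hg y x u v]
  abel

omit hg

/-! ### The central subgroup as a commutative group -/

def centGroup (hD : CentralData Z) : CommGroup ↥Z where
  mul a b := ⟨a.1 * b.1, hD.mul_mem _ a.2 _ b.2⟩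
  one := ⟨1, hD.one_mem⟩
  inv a := ⟨a.1⁻¹, hD.inv_mem _ a.2⟩
  mul_assoc a b c := Subtype.ext (za1 hD a.2 b.1 c.1)
  one_mul a := Subtype.ext (IPLoop.one_mul a.1)
  mul_one a := Subtype.ext (IPLoop.mul_one a.1)
  inv_mul_cancel a := Subtype.ext (invmul a.1)
  mul_comm a b := Subtype.ext (zc hD a.2 b.1)

/-! ### Additivity of the associator -/

theorem assoc_additive (hD : CentralData Z) (hM : IsMoufang L) :
    (∀ u v x y : L, assoc (u * v) x y = assoc u x y * assoc v x y) ∧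
    (∀ x u v y : L, assoc x (u * v) y = assoc x u y * assoc x v y) ∧
    (∀ x y u v : L, assoc x y (u * v) = assoc x y u * assoc x y v) := by
  letI : CommGroup ↥Z := centGroup hD
  let g : L → L → L → Additive ↥Z := fun a b c =>
    Additive.ofMul (⟨assoc a b c, hD.assoc_mem a b c⟩ : ↥Z)
  have keyneg : ∀ a b c a' b' c' : L,
      assoc a b c = (assoc a' b' c')⁻¹ → g a b c = - g a' b' c' := by
    intro a b c a' b' c' h
    have h1 : (⟨assoc a b c, hD.assoc_mem a b c⟩ : ↥Z)
        = (⟨assoc a' b' c', hD.assoc_mem a' b' c'⟩ : ↥Z)⁻¹ := Subtype.ext h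
    have h2 := congrArg Additive.ofMul h1
    rw [ofMul_inv] at h2
    exact h2
  have keyeq : ∀ a b c a' b' c' : L,
      assoc a b c = assoc a' b' c' → g a b c = g a' b' c' := by
    intro a b c a' b' c' h
    exact congrArg Additive.ofMul (Subtype.ext h)
  have key0 : ∀ a b c : L, assoc a b c = 1 → g a b c = 0 := by
    intro a b c h
    have h1 : (⟨assoc a b c, hD.assoc_mem a b c⟩ : ↥Z) = 1 := Subtype.ext h
    have h2 := congrArg Additive.ofMul h1
    rwa [ofMul_one] at h2
  have hg : JuggleHyp g := by
    refine ⟨?_, ?_, ?_, ?_, ?_, ?_, ?_, ?_⟩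
    · intro x y z; exact keyneg _ _ _ _ _ _ (assoc_em1 hD hM x y z)
    · intro x y z; exact keyneg _ _ _ _ _ _ (assoc_em2 hD hM x y z)
    · intro x y u v
      have h := assoc_coc hD x y u v
      have h1 : (⟨assoc x y (u * v), hD.assoc_mem x y (u * v)⟩ : ↥Z)
          = ((⟨assoc y u v, hD.assoc_mem y u v⟩ : ↥Z)
              * ((⟨assoc x (y * u) v, hD.assoc_mem x (y * u) v⟩ : ↥Z)
                * (⟨assoc x y u, hD.assoc_mem x y u⟩ : ↥Z)))
            * (⟨assoc (x * y) u v, hD.assoc_mem (x * y) u v⟩ : ↥Z)⁻¹ := Subtype.ext h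
    
      have h2 := congrArg Additive.ofMul h1
      rw [ofMul_mul, ofMul_mul, ofMul_mul, ofMul_inv] at h2
      rw [← sub_eq_add_neg] at h2
      exact h2
    · intro x y z; exact keyneg _ _ _ _ _ _ (assoc_inv3 hD x y z)
    · intro z y w; exact keyneg _ _ _ _ _ _ (assoc_inv1 hD z y w)
    · intro x y; exact key0 _ _ _ (assoc_flex hM x y)
    · intro x y; exact key0 _ _ _ (assoc_rr hM x y)
    · intro x y u v; exact keyeq _ _ _ _ _ _ (assoc_comm3 hD x y u v)
  refine ⟨?_, ?_, ?_⟩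
  · intro u v x y
    have h := Jadd1 hg u v x y
    rw [← ofMul_mul] at h
    exact congrArg Subtype.val (Additive.ofMul.injective h)
  · intro x u v y
    have h := Jadd2 hg x u v y
    rw [← ofMul_mul] at h
    exact congrArg Subtype.val (Additive.ofMul.injective h)
  · intro x y u v
    have h := Jadd3 hg x y u v
    rw [← ofMul_mul] at h
    exact congrArg Subtype.val (Additive.ofMul.injective h)

/-! ### Powers -/

theorem npow_succ' (c : L) (n : ℕ) : c ^ (n + 1) = c * c ^ n := rfl

theorem npow_zero' (c : L) : c ^ (0 : ℕ) = 1 := rfl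

theorem cpow_mem (hD : CentralData Z) {z : L} (hz : z ∈ Z) : ∀ n : ℕ, z ^ n ∈ Z
  | 0 => hD.one_mem
  | n + 1 => hD.mul_mem _ hz _ (cpow_mem hD hz n)

theorem one_pow' : ∀ n : ℕ, (1 : L) ^ n = 1
  | 0 => rfl
  | n + 1 => by rw [npow_succ', one_pow' n, IPLoop.mul_one]

theorem cpow_add (hD : CentralData Z) {z : L} (hz : z ∈ Z) :
    ∀ n m : ℕ, z ^ n * z ^ m = z ^ (n + m)
  | 0, m => by rw [npow_zero', IPLoop.one_mul, Nat.zero_add]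
  | n + 1, m => by
    rw [npow_succ', za1 hD hz (z ^ n) (z ^ m), cpow_add hD hz n m]
    rw [show n + 1 + m = (n + m) + 1 by omega]
    exact (npow_succ' z (n + m)).symm

theorem cpow_mul (hD : CentralData Z) {z : L} (hz : z ∈ Z) :
    ∀ n m : ℕ, z ^ (n * m) = (z ^ n) ^ m
  | n, 0 => by rw [Nat.mul_zero]; rfl
  | n, m + 1 => by
    rw [npow_succ' (z ^ n) m, ← cpow_mul hD hz n m,
      cpow_add hD hz n (n * m), show n + n * m = n * (m + 1) by ring]

/-! ### Vanishing of associators on powers -/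

theorem assoc_pw3 (hD : CentralData Z)
    (hadd3 : ∀ x y u v : L, assoc x y (u * v) = assoc x y u * assoc x y v)
    {x y w : L} (h : assoc x y w = 1) : ∀ n : ℕ, assoc x y (w ^ n) = 1
  | 0 => assoc_one3 hD x y
  | n + 1 => by
    rw [npow_succ', hadd3 x y w (w ^ n), h, assoc_pw3 hD hadd3 h n, IPLoop.mul_one]

theorem assoc_pw2 (hD : CentralData Z)
    (hadd2 : ∀ x u v y : L, assoc x (u * v) y = assoc x u y * assoc x v y)
    {x y w : L} (h : assoc x w y = 1) : ∀ n : ℕ, assoc x (w ^ n) y = 1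
  | 0 => ((hD.cent 1 hD.one_mem).2 x y).2.1
  | n + 1 => by
    rw [npow_succ', hadd2 x w (w ^ n) y, h, assoc_pw2 hD hadd2 h n, IPLoop.mul_one]

/-! ### Bilinearity of the commutator on powers -/

theorem comm_split (hD : CentralData Z) (x y z : L)
    (h1 : assoc y z x = 1) (h2 : assoc y x z = 1) (h3 : assoc x y z = 1) :
    comm x (y * z) = comm x y * comm x z := by
  have hq1 : comm x y ∈ Z := hD.comm_mem x y
  have hq2 : comm x z ∈ Z := hD.comm_mem x z
  refine (comm_unique ?_).symm
  calc x * (y * z)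
      = (x * y) * z := (mul_of_assoc_one h3).symm
    _ = ((y * x) * comm x y) * z := by rw [comm_eq x y]
    _ = ((y * x) * z) * comm x y := zr hD hq1 (y * x) z
    _ = (y * (x * z)) * comm x y := by rw [mul_of_assoc_one h2]
    _ = (y * ((z * x) * comm x z)) * comm x y := by rw [comm_eq x z]
    _ = ((y * (z * x)) * comm x z) * comm x y := by rw [za3 hD hq2 y (z * x)]
    _ = (((y * z) * x) * comm x z) * comm x y := by rw [mul_of_assoc_one h1]
    _ = ((y * z) * x) * (comm x z * comm x y) := za3 hD hq1 ((y * z) * x) (comm x z)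
    _ = ((y * z) * x) * (comm x y * comm x z) := by rw [zc hD hq2 (comm x y)]

theorem comm_one_right (d : L) : comm d 1 = 1 := by
  show (1 * d)⁻¹ * (d * 1) = 1
  rw [IPLoop.one_mul, IPLoop.mul_one, invmul]

theorem comm_pow (hD : CentralData Z) (hM : IsMoufang L) (c d : L) :
    ∀ n : ℕ, comm d (c ^ n) = (comm d c) ^ n
  | 0 => comm_one_right d
  | n + 1 => by
    obtain ⟨hadd1, hadd2, hadd3⟩ := assoc_additive hD hM
    have h1 : assoc c (c ^ n) d = 1 := assoc_pw2 hD hadd2 (assoc_ll hM c d) n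
    have h2 : assoc c d (c ^ n) = 1 := assoc_pw3 hD hadd3 (assoc_flex hM c d) n
    have h3 : assoc d c (c ^ n) = 1 := assoc_pw3 hD hadd3 (assoc_rr hM d c) n
    rw [npow_succ', comm_split hD d c (c ^ n) h1 h2 h3, comm_pow hD hM c d n]
    exact (npow_succ' (comm d c) n).symm

/-! ### The main power formula -/

theorem mainpow (hD : CentralData Z) (hM : IsMoufang L) (c d : L) :
    ∀ n : ℕ, (c * d) ^ n = (c ^ n * d ^ n) * (comm d c) ^ n.choose 2
  | 0 => by
    show (1 : L) = (1 * 1) * 1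
    rw [IPLoop.mul_one, IPLoop.mul_one]
  | n + 1 => by
    obtain ⟨hadd1, hadd2, hadd3⟩ := assoc_additive hD hM
    have hq : comm d c ∈ Z := hD.comm_mem d c
    have hqk : (comm d c) ^ n.choose 2 ∈ Z := cpow_mem hD hq _
    have hqn : (comm d c) ^ n ∈ Z := cpow_mem hD hq n
    have hcd : assoc (c * d) c d = 1 := by
      rw [hadd1 c d c d, assoc_ll hM c d, assoc_flex hM d c, IPLoop.mul_one]
    have F5 : assoc (c * d) (c ^ n) (d ^ n) = 1 :=
      assoc_pw3 hD hadd3 (assoc_pw2 hD hadd2 hcd n) n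
    have F1 : assoc c d (c ^ n) = 1 := assoc_pw3 hD hadd3 (assoc_flex hM c d) n
    have F2 : assoc c (c ^ n) d = 1 := assoc_pw2 hD hadd2 (assoc_ll hM c d) n
    have F3 : assoc (c ^ (n + 1)) d (d ^ n) = 1 :=
      assoc_pw3 hD hadd3 (assoc_rr hM (c ^ (n + 1)) d) n
    have prodstep : (c * d) * (c ^ n * d ^ n)
        = (c ^ (n + 1) * d ^ (n + 1)) * (comm d c) ^ n := by
      have hstep1 : (c * d) * (c ^ n * d ^ n) = ((c * d) * c ^ n) * d ^ n := by
        have h := assoc_eq (c * d) (c ^ n) (d ^ n)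
        rw [F5, IPLoop.mul_one] at h
        exact h.symm
      have hstep2 : (c * d) * c ^ n = c * (d * c ^ n) := by
        have h := assoc_eq c d (c ^ n)
        rwa [F1, IPLoop.mul_one] at h
      have hstep3 : d * c ^ n = (c ^ n * d) * (comm d c) ^ n := by
        rw [comm_eq d (c ^ n), comm_pow hD hM c d n]
      have hstep5 : c * (c ^ n * d) = c ^ (n + 1) * d := by
        have h := assoc_eq c (c ^ n) d
        rw [F2, IPLoop.mul_one] at h
        exact h.symm
      calc (c * d) * (c ^ n * d ^ n)
          = ((c * d) * c ^ n) * d ^ n := hstep1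
        _ = (c * (d * c ^ n)) * d ^ n := by rw [hstep2]
        _ = (c * ((c ^ n * d) * (comm d c) ^ n)) * d ^ n := by rw [hstep3]
        _ = ((c * (c ^ n * d)) * (comm d c) ^ n) * d ^ n := by
            rw [za3 hD hqn c (c ^ n * d)]
        _ = ((c ^ (n + 1) * d) * (comm d c) ^ n) * d ^ n := by rw [hstep5]
        _ = ((c ^ (n + 1) * d) * d ^ n) * (comm d c) ^ n := zr hD hqn (c ^ (n + 1) * d) (d ^ n)
        _ = (c ^ (n + 1) * (d * d ^ n)) * (comm d c) ^ n := by
            have h := assoc_eq (c ^ (n + 1)) d (d ^ n)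
            rw [F3, IPLoop.mul_one] at h
            rw [h]
        _ = (c ^ (n + 1) * d ^ (n + 1)) * (comm d c) ^ n := rfl
    calc (c * d) ^ (n + 1)
        = (c * d) * ((c * d) ^ n) := rfl
      _ = (c * d) * ((c ^ n * d ^ n) * (comm d c) ^ n.choose 2) := by
          rw [mainpow hD hM c d n]
      _ = ((c * d) * (c ^ n * d ^ n)) * (comm d c) ^ n.choose 2 :=
          (za3 hD hqk (c * d) (c ^ n * d ^ n)).symm
      _ = ((c ^ (n + 1) * d ^ (n + 1)) * (comm d c) ^ n) * (comm d c) ^ n.choose 2 := by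
          rw [prodstep]
      _ = (c ^ (n + 1) * d ^ (n + 1)) * ((comm d c) ^ n * (comm d c) ^ n.choose 2) :=
          za3 hD hqk (c ^ (n + 1) * d ^ (n + 1)) ((comm d c) ^ n)
      _ = (c ^ (n + 1) * d ^ (n + 1)) * (comm d c) ^ (n + n.choose 2) := by
          rw [cpow_add hD hq n (n.choose 2)]
      _ = (c ^ (n + 1) * d ^ (n + 1)) * (comm d c) ^ (n + 1).choose 2 := by
          rw [show (n + 1).choose 2 = n + n.choose 2 by
            rw [Nat.choose_succ_succ n 1, Nat.choose_one_right]]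

theorem mulcent_pow (hD : CentralData Z) {z : L} (hz : z ∈ Z) (c : L) :
    ∀ n : ℕ, (c * z) ^ n = c ^ n * z ^ n
  | 0 => by
    show (1 : L) = 1 * 1
    rw [IPLoop.mul_one]
  | n + 1 => by
    have hzn : z ^ n ∈ Z := cpow_mem hD hz n
    calc (c * z) ^ (n + 1)
        = (c * z) * ((c * z) ^ n) := rfl
      _ = (c * z) * (c ^ n * z ^ n) := by rw [mulcent_pow hD hz c n]
      _ = (c * (c ^ n * z ^ n)) * z := zr hD hz c (c ^ n * z ^ n)
      _ = ((c * c ^ n) * z ^ n) * z := by rw [za3 hD hzn c (c ^ n)]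
      _ = (c * c ^ n) * (z ^ n * z) := za3 hD hz (c * c ^ n) (z ^ n)
      _ = (c * c ^ n) * (z * z ^ n) := by rw [zc hD hz (z ^ n)]
      _ = c ^ (n + 1) * z ^ (n + 1) := rfl

end Stmt11Aux

open IPLoop Stmt11Aux in
/-- If `L` is a Moufang loop with a central subgroup `Z` of order `p` such that
`L/Z` is an elementary abelian `p`-group, then `(cd)² = c²d²[c,d]` when `p = 2`
and `(cd)^p = c^p d^p` when `p > 2`; in particular `cZ ↦ c^p` is well defined. -/
theorem stmt11 {L : Type*} [IPLoop L] (hM : IsMoufang L)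
    (p : ℕ) (hp : p.Prime) (Z : Set L)
    (h1 : (1 : L) ∈ Z) (hinv : ∀ z ∈ Z, z⁻¹ ∈ Z)
    (hmulZ : ∀ z ∈ Z, ∀ w ∈ Z, z * w ∈ Z)
    (hcent : ∀ z ∈ Z, inCenter z) (hcard : Nat.card Z = p)
    (hpow : ∀ c : L, c ^ p ∈ Z) (hcomm : ∀ c d : L, comm c d ∈ Z)
    (hassoc : ∀ c d e : L, assoc c d e ∈ Z) :
    (p = 2 → ∀ c d : L,
      (c * d) ^ (2 : ℕ) = (c ^ (2 : ℕ) * d ^ (2 : ℕ)) * comm c d) ∧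
    (2 < p → ∀ c d : L, (c * d) ^ p = c ^ p * d ^ p) ∧
    (∀ c d : L, (∃ z ∈ Z, d = c * z) → d ^ p = c ^ p) := by
  have hD : CentralData Z := ⟨h1, hinv, hmulZ, hcent, hcomm, hassoc⟩
  letI : CommGroup ↥Z := centGroup hD
  haveI : Finite ↥Z := Nat.finite_of_card_ne_zero (by rw [hcard]; exact hp.pos.ne')
  have subpow : ∀ (w : ↥Z) (n : ℕ), ((w ^ n : ↥Z) : L) = (w : L) ^ n := by
    intro w n
    induction n with
    | zero => rw [pow_zero]; rfl
    | succ k ih =>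
      calc ((w ^ (k + 1) : ↥Z) : L) = ((w ^ k * w : ↥Z) : L) := by rw [pow_succ]
        _ = ((w ^ k : ↥Z) : L) * (w : L) := rfl
        _ = (w : L) ^ k * (w : L) := by rw [ih]
        _ = (w : L) * (w : L) ^ k := (zc hD w.2 ((w : L) ^ k)).symm
        _ = (w : L) ^ (k + 1) := rfl
  have hzp : ∀ z, z ∈ Z → z ^ p = (1 : L) := by
    intro z hz
    have hdvd := orderOf_dvd_natCard (⟨z, hz⟩ : ↥Z)
    rw [hcard] at hdvd
    have h1' : (⟨z, hz⟩ : ↥Z) ^ p = 1 := orderOf_dvd_iff_pow_eq_one.mp hdvd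
    have h2' := congrArg Subtype.val h1'
    rwa [subpow] at h2'
  refine ⟨?_, ?_, ?_⟩
  · -- p = 2
    intro hp2 c d
    have hm := mainpow hD hM c d 2
    rw [show Nat.choose 2 2 = 1 from rfl] at hm
    rw [show (comm d c) ^ (1 : ℕ) = comm d c * 1 from rfl, IPLoop.mul_one] at hm
    have hcc : comm d c * comm c d = 1 := comm_mul_comm hD c d
    have heq1 : comm d c = (comm c d)⁻¹ := inv_of_mul_one_left hcc
    have hsq : comm c d * comm c d = 1 := by
      have h := hzp (comm c d) (hcomm c d)
      rw [hp2] at h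
      rw [show (comm c d) ^ (2 : ℕ) = comm c d * (comm c d * 1) from rfl,
        IPLoop.mul_one] at h
      exact h
    have heq2 : (comm c d)⁻¹ = comm c d := (inv_of_mul_one_right hsq).symm
    rw [heq1, heq2] at hm
    exact hm
  · -- p odd
    intro hp2 c d
    have hm := mainpow hD hM c d p
    have hq1 : (comm d c) ^ p.choose 2 = 1 := by
      obtain ⟨t, ht⟩ := hp.dvd_choose_self (by norm_num) hp2
      rw [ht, cpow_mul hD (hcomm d c) p t, hzp _ (hcomm d c), one_pow' t]
    rw [hq1, IPLoop.mul_one] at hm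
    exact hm
  · -- well-definedness
    rintro c d ⟨z, hz, rfl⟩
    rw [mulcent_pow hD hz c p, hzp z hz, IPLoop.mul_one]
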